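/- Let (I,J,K) be a hypercomplex structure on E and let ∇ be defined by ∇_U V = −(1/2)·K(JV∘IU − J(V∘IU) − I(JV∘U) + JI(V∘U)), extended ℂ-bilinearly to E_ℂ. Then for all X, Y ∈ L_J and ξ, η ∈ L*_J: ∇_X ξ ∈ L*_J with ⟨∇_X ξ, Y⟩ = ρ(X)⟨ξ,Y⟩ − ρ(Y)⟨ξ,X⟩ − ⟨ξ, X∘Y⟩, and ∇_ξ X ∈ L_J with ⟨∇_ξ X, η⟩ = ρ(ξ)⟨X,η⟩ − ρ(η)⟨X,ξ⟩ − ⟨X, ξ∘η⟩. -/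
import Mathlib


open scoped TensorProduct
section BC

variable {M N P : Type} [AddCommGroup M] [Module ℝ M] [AddCommGroup N] [Module ℝ N]
  [AddCommGroup P] [Module ℝ P]

/-- Complex-bilinear extension of an `ℝ`-bilinear map to the complexifications. -/
noncomputable def bcBilin (B : M →ₗ[ℝ] N →ₗ[ℝ] P) :
    ℂ ⊗[ℝ] M →ₗ[ℂ] ℂ ⊗[ℝ] N →ₗ[ℂ] ℂ ⊗[ℝ] P :=
  LinearMap.liftBaseChange ℂ ((LinearMap.baseChangeHom ℝ ℂ N P) ∘ₗ B)

/-- Complex conjugation on the complexification `ℂ ⊗[ℝ] M`. -/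
noncomputable def conjT (M : Type) [AddCommGroup M] [Module ℝ M] :
    ℂ ⊗[ℝ] M →ₗ[ℝ] ℂ ⊗[ℝ] M :=
  TensorProduct.map Complex.conjAe.toLinearMap LinearMap.id

/-- The `i`-eigenspace of a `ℂ`-linear endomorphism of `ℂ ⊗[ℝ] M`. -/
def eigP (Jc : ℂ ⊗[ℝ] M →ₗ[ℂ] ℂ ⊗[ℝ] M) : Set (ℂ ⊗[ℝ] M) :=
  {e | Jc e = Complex.I • e}

/-- The `-i`-eigenspace of a `ℂ`-linear endomorphism of `ℂ ⊗[ℝ] M`. -/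
def eigM (Jc : ℂ ⊗[ℝ] M →ₗ[ℂ] ℂ ⊗[ℝ] M) : Set (ℂ ⊗[ℝ] M) :=
  {e | Jc e = -(Complex.I • e)}

end BC

/-- An (algebraic) Courant algebroid: a commutative `ℝ`-algebra `A`, an `A`-module `E`,
a nondegenerate symmetric `A`-bilinear pairing, an anchor with values in `ℝ`-linear
derivations of `A`, a map `Dm : A → E`, and an `ℝ`-bilinear Dorfman bracket. -/
structure CourantAlgebroid (A E : Type) [CommRing A] [Algebra ℝ A]
    [AddCommGroup E] [Module ℝ E] [Module A E] [IsScalarTower ℝ A E] : Type where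
  pair : E →ₗ[A] E →ₗ[A] A
  pair_symm : ∀ x y, pair x y = pair y x
  pair_nondeg : ∀ x, (∀ y, pair x y = 0) → x = 0
  anchor : E →ₗ[A] Derivation ℝ A A
  Dm : A →ₗ[ℝ] E
  pair_Dm : ∀ (f : A) (x : E), pair (Dm f) x = (1/2 : ℝ) • anchor x f
  brac : E →ₗ[ℝ] E →ₗ[ℝ] E
  brac_leibniz : ∀ x y z, brac x (brac y z) = brac (brac x y) z + brac y (brac x z)
  anchor_brac : ∀ (x y : E) (f : A),
    anchor (brac x y) f = anchor x (anchor y f) - anchor y (anchor x f)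
  brac_smul : ∀ (f : A) (x y : E), brac x (f • y) = anchor x f • y + f • brac x y
  brac_add_swap : ∀ x y, brac x y + brac y x = (2 : ℝ) • Dm (pair x y)
  Dm_brac : ∀ (f : A) (x : E), brac (Dm f) x = 0
  anchor_pair : ∀ x y z, anchor x (pair y z) = pair (brac x y) z + pair y (brac x z)

namespace CourantAlgebroid

variable {A E : Type} [CommRing A] [Algebra ℝ A]
    [AddCommGroup E] [Module ℝ E] [Module A E] [IsScalarTower ℝ A E]

/-- The Nijenhuis concomitant of two operators with respect to a bracket. -/
def nijGen {M : Type*} [AddCommGroup M] (br : M → M → M) (F G : M → M) (U V : M) : M :=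
  br (F U) (G V) - F (br U (G V)) - G (br (F U) V) + F (G (br U V))
    + br (G U) (F V) - G (br U (F V)) - F (br (G U) V) + G (F (br U V))

/-- The Nijenhuis concomitant `N(F,G)` of two `A`-linear endomorphisms of `E`. -/
def nij (C : CourantAlgebroid A E) (F G : E →ₗ[A] E) (U V : E) : E :=
  nijGen (fun x y => C.brac x y) (fun e => F e) (fun e => G e) U V

/-- An almost complex structure: an orthogonal endomorphism squaring to `-1`. -/
def IsAlmostComplexStr (C : CourantAlgebroid A E) (J : E →ₗ[A] E) : Prop :=
  (∀ e, J (J e) = -e) ∧ ∀ x y, C.pair (J x) (J y) = C.pair x y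

/-- A complex structure: an almost complex structure with vanishing Nijenhuis concomitant. -/
def IsComplexStr (C : CourantAlgebroid A E) (J : E →ₗ[A] E) : Prop :=
  C.IsAlmostComplexStr J ∧ ∀ U V, C.nij J J U V = 0

/-- An almost hypercomplex structure: a triple of almost complex structures
satisfying the quaternionic relations. -/
def IsAlmostHypercomplex (C : CourantAlgebroid A E) (I J K : E →ₗ[A] E) : Prop :=
  C.IsAlmostComplexStr I ∧ C.IsAlmostComplexStr J ∧ C.IsAlmostComplexStr K ∧
    ∀ e, I (J (K e)) = -e

/-- A hypercomplex structure: an almost hypercomplex structure all of whose six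
Nijenhuis concomitants vanish. -/
def IsHypercomplex (C : CourantAlgebroid A E) (I J K : E →ₗ[A] E) : Prop :=
  C.IsAlmostHypercomplex I J K ∧
    (∀ U V, C.nij I I U V = 0) ∧ (∀ U V, C.nij I J U V = 0) ∧ (∀ U V, C.nij I K U V = 0) ∧
    (∀ U V, C.nij J J U V = 0) ∧ (∀ U V, C.nij J K U V = 0) ∧ (∀ U V, C.nij K K U V = 0)

/-- The Poisson-type bracket on `A` induced by a skew-symmetric endomorphism `F`. -/
def pb (C : CourantAlgebroid A E) (F : E →ₗ[A] E) (f g : A) : A :=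
  C.pair (F (C.Dm f)) (C.Dm g)

/-- `Δ_f(U,V)` associated with an almost hypercomplex triple. -/
def Delta (C : CourantAlgebroid A E) (I J K : E →ₗ[A] E) (f : A) (U V : E) : E :=
  C.pair U V • C.Dm f + C.pair (I U) V • I (C.Dm f) + C.pair (J U) V • J (C.Dm f)
    + C.pair (K U) V • K (C.Dm f)

/-- A hypercomplex connection relative to an almost hypercomplex triple. -/
def IsHConn (C : CourantAlgebroid A E) (I J K : E →ₗ[A] E)
    (conn : E →ₗ[ℝ] E →ₗ[ℝ] E) : Prop :=
  (∀ (f : A) (U V : E), conn (f • U) V = f • conn U V) ∧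
  (∀ (f : A) (U V : E),
    conn U (f • V) = C.anchor U f • V + f • conn U V - C.Delta I J K f U V)

/-- The torsion of an `ℝ`-bilinear connection. -/
noncomputable def torsion (C : CourantAlgebroid A E) (conn : E →ₗ[ℝ] E →ₗ[ℝ] E) (U V : E) : E :=
  conn U V - conn V U - (1/2 : ℝ) • (C.brac U V - C.brac V U)

/-- The canonical hypercomplex connection. -/
noncomputable def hconn (C : CourantAlgebroid A E) (I J K : E →ₗ[A] E) (U V : E) : E :=
  -((1/2 : ℝ) • K (C.brac (J V) (I U) - J (C.brac V (I U)) - I (C.brac (J V) U)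
      + J (I (C.brac V U))))

/-- The pairing as an `ℝ`-bilinear map. -/
noncomputable def pairR (C : CourantAlgebroid A E) : E →ₗ[ℝ] E →ₗ[ℝ] A :=
  LinearMap.mk₂ ℝ (fun x y => C.pair x y)
    (fun x x' y => by simp)
    (fun r x y => by
      show C.pair (r • x) y = r • C.pair x y
      rw [← algebraMap_smul A r x, map_smul, LinearMap.smul_apply, algebraMap_smul])
    (fun x y y' => by simp)
    (fun r x y => by
      show C.pair x (r • y) = r • C.pair x y
      rw [← algebraMap_smul A r y, map_smul, algebraMap_smul])

/-- The anchor as an `ℝ`-bilinear map `E → A → A`. -/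
noncomputable def rhoR (C : CourantAlgebroid A E) : E →ₗ[ℝ] A →ₗ[ℝ] A :=
  LinearMap.mk₂ ℝ (fun x f => C.anchor x f)
    (fun x x' f => by simp)
    (fun r x f => by
      show C.anchor (r • x) f = r • C.anchor x f
      rw [← algebraMap_smul A r x, map_smul, Derivation.smul_apply, algebraMap_smul])
    (fun x f f' => by simp)
    (fun r x f => by simp)

/-- The `A`-module structure on `E` as an `ℝ`-bilinear map. -/
noncomputable def smulR (A E : Type) [CommRing A] [Algebra ℝ A]
    [AddCommGroup E] [Module ℝ E] [Module A E] [IsScalarTower ℝ A E] :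
    A →ₗ[ℝ] E →ₗ[ℝ] E :=
  LinearMap.mk₂ ℝ (fun a e => a • e)
    (fun a a' e => add_smul a a' e)
    (fun r a e => smul_assoc r a e)
    (fun a e e' => smul_add a e e')
    (fun r a e => smul_comm a r e)

/-- Complex-bilinear extension of the pairing. -/
noncomputable def pairC (C : CourantAlgebroid A E) :
    ℂ ⊗[ℝ] E →ₗ[ℂ] ℂ ⊗[ℝ] E →ₗ[ℂ] ℂ ⊗[ℝ] A := bcBilin C.pairR

/-- Complex-bilinear extension of the Dorfman bracket. -/
noncomputable def bracC (C : CourantAlgebroid A E) :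
    ℂ ⊗[ℝ] E →ₗ[ℂ] ℂ ⊗[ℝ] E →ₗ[ℂ] ℂ ⊗[ℝ] E := bcBilin C.brac

/-- Complex-bilinear extension of the anchor. -/
noncomputable def rhoC (C : CourantAlgebroid A E) :
    ℂ ⊗[ℝ] E →ₗ[ℂ] ℂ ⊗[ℝ] A →ₗ[ℂ] ℂ ⊗[ℝ] A := bcBilin C.rhoR

/-- Complex-bilinear extension of the `A`-action on `E`. -/
noncomputable def smulC (C : CourantAlgebroid A E) :
    ℂ ⊗[ℝ] A →ₗ[ℂ] ℂ ⊗[ℝ] E →ₗ[ℂ] ℂ ⊗[ℝ] E := bcBilin (smulR A E)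

/-- The `ℂ`-linear extension of an `A`-linear endomorphism of `E` to `ℂ ⊗[ℝ] E`. -/
noncomputable def cext (F : E →ₗ[A] E) : ℂ ⊗[ℝ] E →ₗ[ℂ] ℂ ⊗[ℝ] E :=
  (F.restrictScalars ℝ).baseChange ℂ

/-- `Ω^♯ = (1/2)(I + iK)` associated with an (almost) hypercomplex triple. -/
noncomputable def OmS (I K : E →ₗ[A] E) : ℂ ⊗[ℝ] E →ₗ[ℂ] ℂ ⊗[ℝ] E :=
  (1/2 : ℂ) • (cext I + Complex.I • cext K)

/-- `Ω̄^♯ = (1/2)(I - iK)` associated with an (almost) hypercomplex triple. -/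
noncomputable def ObS (I K : E →ₗ[A] E) : ℂ ⊗[ℝ] E →ₗ[ℂ] ℂ ⊗[ℝ] E :=
  (1/2 : ℂ) • (cext I - Complex.I • cext K)

/-- `Ω(ξ,η) = ⟨Ω^♯ξ, η⟩`. -/
noncomputable def Omf (C : CourantAlgebroid A E) (I K : E →ₗ[A] E)
    (x y : ℂ ⊗[ℝ] E) : ℂ ⊗[ℝ] A :=
  C.pairC (OmS I K x) y

/-- The complexified hypercomplex connection on `ℂ ⊗[ℝ] E`. -/
noncomputable def hconnC (C : CourantAlgebroid A E) (I J K : E →ₗ[A] E)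
    (U V : ℂ ⊗[ℝ] E) : ℂ ⊗[ℝ] E :=
  -((1/2 : ℂ) • cext K (C.bracC (cext J V) (cext I U) - cext J (C.bracC V (cext I U))
      - cext I (C.bracC (cext J V) U) + cext J (cext I (C.bracC V U))))

end CourantAlgebroid


/-! ### Auxiliary lemmas -/

section Aux

open TensorProduct

variable {M' : Type} [AddCommGroup M'] [Module ℂ M']

lemma aux_smul_I_eq {x b : M'} (h1 : (2*Complex.I) • x = (2:ℂ) • b) :
    x = -(Complex.I • b) := by
  have h2 : ((-Complex.I/2) * (2*Complex.I) : ℂ) = 1 := by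
    field_simp [Complex.I_mul_I]; ring_nf; simp [Complex.I_sq]
  calc x = ((-Complex.I/2) * (2*Complex.I)) • x := by rw [h2, one_smul]
    _ = (-Complex.I/2) • ((2*Complex.I) • x) := by rw [mul_smul]
    _ = (-Complex.I/2) • ((2:ℂ) • b) := by rw [h1]
    _ = -(Complex.I • b) := by rw [smul_smul]; match_scalars; ring

lemma aux_smul_I_eq' {x b : M'} (h1 : (2*Complex.I) • x = (-2:ℂ) • b) :
    x = Complex.I • b := by
  have := aux_smul_I_eq (x := x) (b := -b) (by rw [h1]; match_scalars <;> ring)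
  rw [this]; rw [smul_neg, neg_neg]

lemma aux_two_I_cancel {p : M'} (h : (2*Complex.I) • p = 0) : p = 0 := by
  have h2 : ((2*Complex.I)⁻¹ * (2*Complex.I) : ℂ) = 1 := by
    rw [inv_mul_cancel₀]; simp [Complex.ext_iff]
  calc p = ((2*Complex.I)⁻¹ * (2*Complex.I)) • p := by rw [h2, one_smul]
    _ = (2*Complex.I)⁻¹ • ((2*Complex.I) • p) := by rw [mul_smul]
    _ = 0 := by rw [h, smul_zero]

lemma aux_half_real {M : Type} [AddCommGroup M] [Module ℝ M] {x : M}
    (h : (2:ℝ) • x = 0) : x = 0 := by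
  have : ((1/2 : ℝ) * 2) = 1 := by norm_num
  calc x = ((1/2:ℝ) * 2) • x := by rw [this, one_smul]
    _ = (1/2:ℝ) • ((2:ℝ) • x) := by rw [mul_smul]
    _ = 0 := by rw [h, smul_zero]

lemma bcBilin_tmul {M N P : Type} [AddCommGroup M] [Module ℝ M] [AddCommGroup N]
    [Module ℝ N] [AddCommGroup P] [Module ℝ P] (B : M →ₗ[ℝ] N →ₗ[ℝ] P)
    (a b : ℂ) (x : M) (y : N) :
    bcBilin B (a ⊗ₜ x) (b ⊗ₜ y) = (a * b) ⊗ₜ (B x y) := by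
  simp [bcBilin, TensorProduct.smul_tmul', smul_eq_mul]

namespace CourantAlgebroid

variable {A E : Type} [CommRing A] [Algebra ℝ A]
    [AddCommGroup E] [Module ℝ E] [Module A E] [IsScalarTower ℝ A E]

lemma cext_tmul (F : E →ₗ[A] E) (a : ℂ) (x : E) :
    cext F (a ⊗ₜ x) = a ⊗ₜ (F x) := by
  simp [cext]

lemma pairC_tmul (C : CourantAlgebroid A E) (a b : ℂ) (x y : E) :
    C.pairC (a ⊗ₜ x) (b ⊗ₜ y) = (a*b) ⊗ₜ (C.pair x y) :=
  bcBilin_tmul _ a b x y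

lemma bracC_tmul (C : CourantAlgebroid A E) (a b : ℂ) (x y : E) :
    C.bracC (a ⊗ₜ x) (b ⊗ₜ y) = (a*b) ⊗ₜ (C.brac x y) :=
  bcBilin_tmul _ a b x y

lemma rhoC_tmul (C : CourantAlgebroid A E) (a b : ℂ) (x : E) (f : A) :
    C.rhoC (a ⊗ₜ x) (b ⊗ₜ f) = (a*b) ⊗ₜ (C.anchor x f) :=
  bcBilin_tmul _ a b x f

/-- Composition of complexified endomorphisms. -/
lemma cext_comp (F G H : E →ₗ[A] E) (hc : ∀ e, F (G e) = H e) (u : ℂ ⊗[ℝ] E) :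
    cext F (cext G u) = cext H u := by
  induction u using TensorProduct.induction_on with
  | zero => simp
  | tmul a x => simp [cext_tmul, hc]
  | add u1 u2 ih1 ih2 => simp only [map_add, ih1, ih2]

lemma cext_comp_neg (F G H : E →ₗ[A] E) (hc : ∀ e, F (G e) = -(H e)) (u : ℂ ⊗[ℝ] E) :
    cext F (cext G u) = -(cext H u) := by
  induction u using TensorProduct.induction_on with
  | zero => simp
  | tmul a x => simp [cext_tmul, hc, TensorProduct.tmul_neg]
  | add u1 u2 ih1 ih2 => simp only [map_add, ih1, ih2]; abel

lemma cext_sq_neg (F : E →ₗ[A] E) (hc : ∀ e, F (F e) = -e) (u : ℂ ⊗[ℝ] E) :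
    cext F (cext F u) = -u := by
  induction u using TensorProduct.induction_on with
  | zero => simp
  | tmul a x => simp [cext_tmul, hc, TensorProduct.tmul_neg]
  | add u1 u2 ih1 ih2 => simp only [map_add, ih1, ih2]; abel

/-- Complexified skew-symmetry of an orthogonal almost complex structure. -/
lemma pairC_skew (C : CourantAlgebroid A E) (F : E →ₗ[A] E)
    (hsk : ∀ x y, C.pair (F x) y = -(C.pair x (F y))) (u v : ℂ ⊗[ℝ] E) :
    C.pairC (cext F u) v = -(C.pairC u (cext F v)) := by
  induction u using TensorProduct.induction_on with
  | zero => simp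
  | tmul a x =>
    induction v using TensorProduct.induction_on with
    | zero => simp
    | tmul b y => simp [cext_tmul, pairC_tmul, hsk, TensorProduct.tmul_neg]
    | add v1 v2 ih1 ih2 =>
      simp only [map_add, LinearMap.add_apply, ih1, ih2]; abel
  | add u1 u2 ih1 ih2 =>
    simp only [map_add, LinearMap.add_apply, ih1, ih2]; abel

lemma pairC_symm (C : CourantAlgebroid A E) (u v : ℂ ⊗[ℝ] E) :
    C.pairC u v = C.pairC v u := by
  induction u using TensorProduct.induction_on with
  | zero => simp
  | tmul a x =>
    induction v using TensorProduct.induction_on with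
    | zero => simp
    | tmul b y => rw [pairC_tmul, pairC_tmul, C.pair_symm, mul_comm]
    | add v1 v2 ih1 ih2 => simp only [map_add, LinearMap.add_apply, ih1, ih2]
  | add u1 u2 ih1 ih2 => simp only [map_add, LinearMap.add_apply, ih1, ih2]

/-- Complexified compatibility of the anchor with the pairing. -/
lemma rhoC_pairC (C : CourantAlgebroid A E) (u v w : ℂ ⊗[ℝ] E) :
    C.rhoC u (C.pairC v w)
      = C.pairC (C.bracC u v) w + C.pairC v (C.bracC u w) := by
  induction u using TensorProduct.induction_on with
  | zero => simp
  | tmul a x =>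
    induction v using TensorProduct.induction_on with
    | zero => simp
    | tmul b y =>
      induction w using TensorProduct.induction_on with
      | zero => simp
      | tmul c z =>
        rw [pairC_tmul, rhoC_tmul, bracC_tmul, bracC_tmul, pairC_tmul, pairC_tmul,
          C.anchor_pair, TensorProduct.tmul_add]
        congr 2 <;> ring
      | add w1 w2 ih1 ih2 =>
        simp only [map_add, LinearMap.add_apply, ih1, ih2]; abel
    | add v1 v2 ih1 ih2 =>
      simp only [map_add, LinearMap.add_apply, ih1, ih2]; abel
  | add u1 u2 ih1 ih2 =>
    simp only [map_add, LinearMap.add_apply, ih1, ih2]; abel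

/-- The real identity `ρ(w)⟨u,v⟩ = ⟨u∘v, w⟩ + ⟨v∘u, w⟩`. -/
lemma anchor_pair_swap (C : CourantAlgebroid A E) (u v w : E) :
    C.anchor w (C.pair u v) = C.pair (C.brac u v) w + C.pair (C.brac v u) w := by
  have h1 : C.pair (C.brac u v) w + C.pair (C.brac v u) w
      = C.pair (C.brac u v + C.brac v u) w := by
    rw [map_add, LinearMap.add_apply]
  have h2 : C.pair ((2:ℝ) • C.Dm (C.pair u v)) w
      = (2:ℝ) • C.pair (C.Dm (C.pair u v)) w := by
    have h3 : C.pairR ((2:ℝ) • C.Dm (C.pair u v)) w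
        = (2:ℝ) • C.pairR (C.Dm (C.pair u v)) w := by
      rw [map_smul, LinearMap.smul_apply]
    exact h3
  rw [h1, C.brac_add_swap, h2, C.pair_Dm, smul_smul]
  norm_num

/-- Complexified version of `anchor_pair_swap`. -/
lemma rhoC_pairC_swap (C : CourantAlgebroid A E) (u v w : ℂ ⊗[ℝ] E) :
    C.rhoC w (C.pairC u v)
      = C.pairC (C.bracC u v) w + C.pairC (C.bracC v u) w := by
  induction u using TensorProduct.induction_on with
  | zero => simp
  | tmul a x =>
    induction v using TensorProduct.induction_on with
    | zero => simp
    | tmul b y =>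
      induction w using TensorProduct.induction_on with
      | zero => simp
      | tmul c z =>
        rw [pairC_tmul, rhoC_tmul, bracC_tmul, bracC_tmul, pairC_tmul, pairC_tmul,
          C.anchor_pair_swap, TensorProduct.tmul_add]
        congr 2 <;> ring
      | add w1 w2 ih1 ih2 =>
        simp only [map_add, LinearMap.add_apply, ih1, ih2]; abel
    | add v1 v2 ih1 ih2 =>
      simp only [map_add, LinearMap.add_apply, ih1, ih2]; abel
  | add u1 u2 ih1 ih2 =>
    simp only [map_add, LinearMap.add_apply, ih1, ih2]; abel

/-- Reduction of the right-hand side of the statement. -/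
lemma rhs_reduce (C : CourantAlgebroid A E) (u v w : ℂ ⊗[ℝ] E) :
    C.rhoC u (C.pairC w v) - C.rhoC v (C.pairC w u) - C.pairC w (C.bracC u v)
      = -(C.pairC (C.bracC w u) v) := by
  rw [C.rhoC_pairC u w v, C.rhoC_pairC_swap w u v]
  abel

/-- The real Nijenhuis consequence for an integrable `J`. -/
lemma nij_real (C : CourantAlgebroid A E) (J : E →ₗ[A] E)
    (hJ2 : ∀ e, J (J e) = -e) (hn : ∀ u v, C.nij J J u v = 0) (u v : E) :
    C.brac (J u) (J v) - J (C.brac u (J v)) - J (C.brac (J u) v) - C.brac u v = 0 := by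
  have h0 := hn u v
  unfold nij nijGen at h0
  simp only [hJ2] at h0
  have h2 : (2:ℝ) • (C.brac (J u) (J v) - J (C.brac u (J v)) - J (C.brac (J u) v)
      - C.brac u v) = 0 := by
    rw [two_smul, ← h0]; abel
  exact aux_half_real h2

/-- The complexified Nijenhuis consequence. -/
lemma nij_C (C : CourantAlgebroid A E) (J : E →ₗ[A] E)
    (hJ2 : ∀ e, J (J e) = -e) (hn : ∀ u v, C.nij J J u v = 0) (u v : ℂ ⊗[ℝ] E) :
    C.bracC (cext J u) (cext J v) - cext J (C.bracC u (cext J v))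
      - cext J (C.bracC (cext J u) v) - C.bracC u v = 0 := by
  induction u using TensorProduct.induction_on with
  | zero => simp
  | tmul a x =>
    induction v using TensorProduct.induction_on with
    | zero => simp
    | tmul b y =>
      rw [cext_tmul, cext_tmul, bracC_tmul, bracC_tmul, bracC_tmul, bracC_tmul,
        cext_tmul, cext_tmul, ← TensorProduct.tmul_sub, ← TensorProduct.tmul_sub,
        ← TensorProduct.tmul_sub, C.nij_real J hJ2 hn, TensorProduct.tmul_zero]
    | add v1 v2 ih1 ih2 =>
      have expand : ∀ v1 v2 : ℂ ⊗[ℝ] E,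
        C.bracC (cext J (a ⊗ₜ x)) (cext J (v1 + v2))
          - cext J (C.bracC (a ⊗ₜ x) (cext J (v1 + v2)))
          - cext J (C.bracC (cext J (a ⊗ₜ x)) (v1 + v2)) - C.bracC (a ⊗ₜ x) (v1 + v2)
        = (C.bracC (cext J (a ⊗ₜ x)) (cext J v1)
            - cext J (C.bracC (a ⊗ₜ x) (cext J v1))
            - cext J (C.bracC (cext J (a ⊗ₜ x)) v1) - C.bracC (a ⊗ₜ x) v1)
          + (C.bracC (cext J (a ⊗ₜ x)) (cext J v2)
            - cext J (C.bracC (a ⊗ₜ x) (cext J v2))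
            - cext J (C.bracC (cext J (a ⊗ₜ x)) v2) - C.bracC (a ⊗ₜ x) v2) := by
        intro v1 v2
        simp only [map_add, LinearMap.add_apply]; abel
      rw [expand, ih1, ih2, add_zero]
  | add u1 u2 ih1 ih2 =>
    have expand :
        C.bracC (cext J (u1 + u2)) (cext J v)
          - cext J (C.bracC (u1 + u2) (cext J v))
          - cext J (C.bracC (cext J (u1 + u2)) v) - C.bracC (u1 + u2) v
        = (C.bracC (cext J u1) (cext J v) - cext J (C.bracC u1 (cext J v))
            - cext J (C.bracC (cext J u1) v) - C.bracC u1 v)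
          + (C.bracC (cext J u2) (cext J v) - cext J (C.bracC u2 (cext J v))
            - cext J (C.bracC (cext J u2) v) - C.bracC u2 v) := by
      simp only [map_add, LinearMap.add_apply]; abel
    rw [expand, ih1, ih2, add_zero]

end CourantAlgebroid

end Aux

section Main

open CourantAlgebroid

variable {A E : Type} [CommRing A] [Algebra ℝ A]
    [AddCommGroup E] [Module ℝ E] [Module A E] [IsScalarTower ℝ A E]
    {C : CourantAlgebroid A E} {I J K : E →ₗ[A] E}

namespace HCAux

variable (h : C.IsHypercomplex I J K)
include h

lemma hI2 : ∀ e, I (I e) = -e := h.1.1.1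
lemma hJ2 : ∀ e, J (J e) = -e := h.1.2.1.1
lemma hK2 : ∀ e, K (K e) = -e := h.1.2.2.1.1

lemma hJK : ∀ e, J (K e) = I e := by
  intro e
  have h1 := congrArg I (h.1.2.2.2 e)
  rw [hI2 h, map_neg] at h1
  exact neg_inj.mp h1

lemma hJI : ∀ e, J (I e) = -(K e) := by
  intro e
  have h1 := congrArg J (hJK h e)
  rw [hJ2 h] at h1
  exact h1.symm

lemma hIK : ∀ e, I (K e) = -(J e) := by
  intro e
  have h1 := hJK h (K e)
  rw [hK2 h, map_neg] at h1
  exact h1.symm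

lemma hIJ : ∀ e, I (J e) = K e := by
  intro e
  have h1 := congrArg I (hIK h e)
  rw [hI2 h, map_neg] at h1
  exact (neg_inj.mp h1).symm

lemma hKJ : ∀ e, K (J e) = -(I e) := by
  intro e
  have key : ∀ x, K (J (I x)) = x := by
    intro x
    have h1 := congrArg K (hJI h x)
    rw [map_neg, hK2 h, neg_neg] at h1
    exact h1
  have h2 := key (I e)
  rw [hI2 h, map_neg, map_neg] at h2
  rw [← h2, neg_neg]

/-- skew-symmetry of an orthogonal a.c.s. -/
lemma skew_of_acs {F : E →ₗ[A] E} (hF : C.IsAlmostComplexStr F) :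
    ∀ x y, C.pair (F x) y = -(C.pair x (F y)) := by
  intro x y
  have h1 := hF.2 x (F y)
  rw [hF.1 y, map_neg] at h1
  rw [← h1, neg_neg]

lemma skewI (x y : E) : C.pair (I x) y = -(C.pair x (I y)) := skew_of_acs h h.1.1 x y
lemma skewJ (x y : E) : C.pair (J x) y = -(C.pair x (J y)) := skew_of_acs h h.1.2.1 x y
lemma skewK (x y : E) : C.pair (K x) y = -(C.pair x (K y)) :=
  skew_of_acs h h.1.2.2.1 x y

lemma skewIC (u v : ℂ ⊗[ℝ] E) : C.pairC (cext I u) v = -(C.pairC u (cext I v)) :=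
  C.pairC_skew I (skewI h) u v
lemma skewJC (u v : ℂ ⊗[ℝ] E) : C.pairC (cext J u) v = -(C.pairC u (cext J v)) :=
  C.pairC_skew J (skewJ h) u v
lemma skewKC (u v : ℂ ⊗[ℝ] E) : C.pairC (cext K u) v = -(C.pairC u (cext K v)) :=
  C.pairC_skew K (skewK h) u v

lemma cJJ (u : ℂ ⊗[ℝ] E) : cext J (cext J u) = -u := cext_sq_neg J (hJ2 h) u
lemma cII (u : ℂ ⊗[ℝ] E) : cext I (cext I u) = -u := cext_sq_neg I (hI2 h) u
lemma cJK (u : ℂ ⊗[ℝ] E) : cext J (cext K u) = cext I u := cext_comp J K I (hJK h) u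
lemma cKJ (u : ℂ ⊗[ℝ] E) : cext K (cext J u) = -(cext I u) :=
  cext_comp_neg K J I (hKJ h) u
lemma cJI (u : ℂ ⊗[ℝ] E) : cext J (cext I u) = -(cext K u) :=
  cext_comp_neg J I K (hJI h) u
lemma cIJ (u : ℂ ⊗[ℝ] E) : cext I (cext J u) = cext K u := cext_comp I J K (hIJ h) u
lemma cIK (u : ℂ ⊗[ℝ] E) : cext I (cext K u) = -(cext J u) :=
  cext_comp_neg I K J (hIK h) u

/-- eigenvector transfers -/
lemma eigP_I {u : ℂ ⊗[ℝ] E} (hu : u ∈ eigP (cext J)) :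
    cext I u ∈ eigM (cext (A := A) (E := E) J) := by
  show cext J (cext I u) = -(Complex.I • cext I u)
  rw [cJI h, ← cIJ h, hu, map_smul]

lemma eigM_I {u : ℂ ⊗[ℝ] E} (hu : u ∈ eigM (cext J)) :
    cext I u ∈ eigP (cext (A := A) (E := E) J) := by
  show cext J (cext I u) = Complex.I • cext I u
  rw [cJI h, ← cIJ h, hu, map_neg, map_smul, neg_neg]

lemma eigP_K {u : ℂ ⊗[ℝ] E} (hu : u ∈ eigP (cext J)) :
    cext K u ∈ eigM (cext (A := A) (E := E) J) := by
  show cext J (cext K u) = -(Complex.I • cext K u)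
  have h1 := cKJ h u
  rw [hu, map_smul] at h1
  rw [cJK h, ← neg_neg (cext I u), ← h1]

lemma eigM_K {u : ℂ ⊗[ℝ] E} (hu : u ∈ eigM (cext J)) :
    cext K u ∈ eigP (cext (A := A) (E := E) J) := by
  show cext J (cext K u) = Complex.I • cext K u
  have h1 := cKJ h u
  rw [hu, map_neg, map_smul] at h1
  rw [cJK h, ← neg_neg (cext I u), ← h1, neg_neg]

/-- isotropy of the eigenspaces -/
lemma eigM_isotropic {u v : ℂ ⊗[ℝ] E} (hu : u ∈ eigM (cext (A := A) (E := E) J))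
    (hv : v ∈ eigM (cext (A := A) (E := E) J)) : C.pairC u v = 0 := by
  have h1 := skewJC h u v
  rw [hu, hv] at h1
  simp only [map_neg, map_smul, LinearMap.neg_apply, LinearMap.smul_apply, neg_neg] at h1
  apply aux_two_I_cancel
  linear_combination (norm := module) -h1

lemma eigP_isotropic {u v : ℂ ⊗[ℝ] E} (hu : u ∈ eigP (cext (A := A) (E := E) J))
    (hv : v ∈ eigP (cext (A := A) (E := E) J)) : C.pairC u v = 0 := by
  have h1 := skewJC h u v
  rw [hu, hv] at h1
  simp only [map_smul, LinearMap.smul_apply] at h1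
  apply aux_two_I_cancel
  linear_combination (norm := module) h1

/-- bracket closure of the eigenspaces -/
lemma eigM_brac {u v : ℂ ⊗[ℝ] E} (hu : u ∈ eigM (cext (A := A) (E := E) J))
    (hv : v ∈ eigM (cext (A := A) (E := E) J)) :
    C.bracC u v ∈ eigM (cext (A := A) (E := E) J) := by
  have h0 := C.nij_C J (hJ2 h) h.2.2.2.2.1 u v
  rw [hu, hv] at h0
  simp only [map_neg, map_smul, LinearMap.neg_apply, LinearMap.smul_apply, smul_neg,
    neg_neg, smul_smul, Complex.I_mul_I, neg_one_smul] at h0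
  show cext J (C.bracC u v) = -(Complex.I • C.bracC u v)
  apply aux_smul_I_eq
  linear_combination (norm := module) h0

lemma eigP_brac {u v : ℂ ⊗[ℝ] E} (hu : u ∈ eigP (cext (A := A) (E := E) J))
    (hv : v ∈ eigP (cext (A := A) (E := E) J)) :
    C.bracC u v ∈ eigP (cext (A := A) (E := E) J) := by
  have h0 := C.nij_C J (hJ2 h) h.2.2.2.2.1 u v
  rw [hu, hv] at h0
  simp only [map_neg, map_smul, LinearMap.neg_apply, LinearMap.smul_apply, smul_neg,
    neg_neg, smul_smul, Complex.I_mul_I, neg_one_smul] at h0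
  show cext J (C.bracC u v) = Complex.I • C.bracC u v
  apply aux_smul_I_eq'
  linear_combination (norm := module) -h0

set_option maxHeartbeats 2000000 in
lemma main1 (X Y ξ : ℂ ⊗[ℝ] E) (hX : X ∈ eigP (cext J)) (hY : Y ∈ eigP (cext J))
    (hξ : ξ ∈ eigM (cext J)) :
    C.hconnC I J K X ξ ∈ eigM (cext (A := A) (E := E) J) ∧
      C.pairC (C.hconnC I J K X ξ) Y = -(C.pairC (C.bracC ξ X) Y) := by
  have hX' : cext J X = Complex.I • X := hX
  have hY' : cext J Y = Complex.I • Y := hY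
  have hξ' : cext J ξ = -(Complex.I • ξ) := hξ
  have hstep : C.hconnC I J K X ξ = -((1/2:ℂ) • cext K (cext J (cext I (C.bracC ξ X) - (C.bracC ξ (cext I X))) + Complex.I • (cext I (C.bracC ξ X) - (C.bracC ξ (cext I X))))) := by
    show -((1/2:ℂ) • cext K (C.bracC (cext J ξ) (cext I X) - cext J (C.bracC ξ (cext I X))
        - cext I (C.bracC (cext J ξ) X) + cext J (cext I (C.bracC ξ X))))
      = -((1/2:ℂ) • cext K (cext J (cext I (C.bracC ξ X) - (C.bracC ξ (cext I X))) + Complex.I • (cext I (C.bracC ξ X) - (C.bracC ξ (cext I X)))))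
    rw [hξ']
    refine congrArg (fun z => -((1/2:ℂ) • cext K z)) ?_
    simp only [map_neg, map_smul, LinearMap.neg_apply, LinearMap.smul_apply, smul_neg,
      map_sub, smul_sub]
    abel
  have hw : cext J (cext J (cext I (C.bracC ξ X) - (C.bracC ξ (cext I X))) + Complex.I • (cext I (C.bracC ξ X) - (C.bracC ξ (cext I X)))) = Complex.I • (cext J (cext I (C.bracC ξ X) - (C.bracC ξ (cext I X))) + Complex.I • (cext I (C.bracC ξ X) - (C.bracC ξ (cext I X)))) := by
    rw [map_add, map_smul, cJJ h (cext I (C.bracC ξ X) - (C.bracC ξ (cext I X))), smul_add, smul_smul, Complex.I_mul_I, neg_one_smul]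
    abel
  constructor
  · have h2 := cKJ h (cext J (cext I (C.bracC ξ X) - (C.bracC ξ (cext I X))) + Complex.I • (cext I (C.bracC ξ X) - (C.bracC ξ (cext I X))))
    rw [hw, map_smul] at h2
    have h3 : cext I (cext J (cext I (C.bracC ξ X) - (C.bracC ξ (cext I X))) + Complex.I • (cext I (C.bracC ξ X) - (C.bracC ξ (cext I X)))) = -(Complex.I • cext K (cext J (cext I (C.bracC ξ X) - (C.bracC ξ (cext I X))) + Complex.I • (cext I (C.bracC ξ X) - (C.bracC ξ (cext I X))))) := by rw [h2, neg_neg]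
    show cext J (C.hconnC I J K X ξ) = -(Complex.I • C.hconnC I J K X ξ)
    rw [hstep, map_neg, map_smul, cJK h (cext J (cext I (C.bracC ξ X) - (C.bracC ξ (cext I X))) + Complex.I • (cext I (C.bracC ξ X) - (C.bracC ξ (cext I X)))), h3]
    module
  · have p1 : C.pairC (cext I (C.bracC ξ X)) (cext I Y) = C.pairC (C.bracC ξ X) Y := by
      rw [skewIC h, cII h, map_neg, neg_neg]
    have p2 : C.pairC (C.bracC ξ (cext I X)) (cext I Y) = 0 :=
      eigM_isotropic h (eigM_brac h hξ (eigP_I h hX)) (eigP_I h hY)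
    have p3 : C.pairC (cext I (C.bracC ξ X)) (cext K Y) = Complex.I • C.pairC (C.bracC ξ X) Y := by
      rw [skewIC h, cIK h, map_neg, neg_neg, hY', map_smul]
    have p4 : C.pairC (C.bracC ξ (cext I X)) (cext K Y) = 0 :=
      eigM_isotropic h (eigM_brac h hξ (eigP_I h hX)) (eigP_K h hY)
    have exp1 : C.pairC (cext I (C.bracC ξ X) - (C.bracC ξ (cext I X))) (cext I Y) = C.pairC (C.bracC ξ X) Y := by
      rw [map_sub, LinearMap.sub_apply, p1, p2, sub_zero]
    have exp2 : C.pairC (cext I (C.bracC ξ X) - (C.bracC ξ (cext I X))) (cext K Y) = Complex.I • C.pairC (C.bracC ξ X) Y := by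
      rw [map_sub, LinearMap.sub_apply, p3, p4, sub_zero]
    have exp3 : C.pairC (cext J (cext I (C.bracC ξ X) - (C.bracC ξ (cext I X))) + Complex.I • (cext I (C.bracC ξ X) - (C.bracC ξ (cext I X)))) (cext K Y) = -((2:ℂ) • C.pairC (C.bracC ξ X) Y) := by
      rw [map_add, LinearMap.add_apply, map_smul, LinearMap.smul_apply,
        skewJC h (cext I (C.bracC ξ X) - (C.bracC ξ (cext I X))) (cext K Y), cJK h Y, exp1, exp2, smul_smul, Complex.I_mul_I,
        neg_one_smul]
      module
    rw [hstep, map_neg, LinearMap.neg_apply, map_smul, LinearMap.smul_apply,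
      skewKC h (cext J (cext I (C.bracC ξ X) - (C.bracC ξ (cext I X))) + Complex.I • (cext I (C.bracC ξ X) - (C.bracC ξ (cext I X)))) Y, exp3]
    module

set_option maxHeartbeats 2000000 in
lemma main2 (X ξ η : ℂ ⊗[ℝ] E) (hX : X ∈ eigP (cext J)) (hξ : ξ ∈ eigM (cext J))
    (hη : η ∈ eigM (cext J)) :
    C.hconnC I J K ξ X ∈ eigP (cext (A := A) (E := E) J) ∧
      C.pairC (C.hconnC I J K ξ X) η = -(C.pairC (C.bracC X ξ) η) := by
  have hX' : cext J X = Complex.I • X := hX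
  have hξ' : cext J ξ = -(Complex.I • ξ) := hξ
  have hη' : cext J η = -(Complex.I • η) := hη
  have hstep : C.hconnC I J K ξ X = -((1/2:ℂ) • cext K (cext J (cext I (C.bracC X ξ) - (C.bracC X (cext I ξ))) - Complex.I • (cext I (C.bracC X ξ) - (C.bracC X (cext I ξ))))) := by
    show -((1/2:ℂ) • cext K (C.bracC (cext J X) (cext I ξ) - cext J (C.bracC X (cext I ξ))
        - cext I (C.bracC (cext J X) ξ) + cext J (cext I (C.bracC X ξ))))
      = -((1/2:ℂ) • cext K (cext J (cext I (C.bracC X ξ) - (C.bracC X (cext I ξ))) - Complex.I • (cext I (C.bracC X ξ) - (C.bracC X (cext I ξ)))))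
    rw [hX']
    refine congrArg (fun z => -((1/2:ℂ) • cext K z)) ?_
    simp only [map_neg, map_smul, LinearMap.neg_apply, LinearMap.smul_apply, smul_neg,
      map_sub, smul_sub]
    abel
  have hw : cext J (cext J (cext I (C.bracC X ξ) - (C.bracC X (cext I ξ))) - Complex.I • (cext I (C.bracC X ξ) - (C.bracC X (cext I ξ)))) = -(Complex.I • (cext J (cext I (C.bracC X ξ) - (C.bracC X (cext I ξ))) - Complex.I • (cext I (C.bracC X ξ) - (C.bracC X (cext I ξ))))) := by
    rw [map_sub, map_smul, cJJ h (cext I (C.bracC X ξ) - (C.bracC X (cext I ξ))), smul_sub, smul_smul, Complex.I_mul_I, neg_one_smul]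
    abel
  constructor
  · have h2 := cKJ h (cext J (cext I (C.bracC X ξ) - (C.bracC X (cext I ξ))) - Complex.I • (cext I (C.bracC X ξ) - (C.bracC X (cext I ξ))))
    rw [hw, map_neg, map_smul] at h2
    have h3 : cext I (cext J (cext I (C.bracC X ξ) - (C.bracC X (cext I ξ))) - Complex.I • (cext I (C.bracC X ξ) - (C.bracC X (cext I ξ)))) = Complex.I • cext K (cext J (cext I (C.bracC X ξ) - (C.bracC X (cext I ξ))) - Complex.I • (cext I (C.bracC X ξ) - (C.bracC X (cext I ξ)))) := (neg_inj.mp h2).symm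
    show cext J (C.hconnC I J K ξ X) = Complex.I • C.hconnC I J K ξ X
    rw [hstep, map_neg, map_smul, cJK h (cext J (cext I (C.bracC X ξ) - (C.bracC X (cext I ξ))) - Complex.I • (cext I (C.bracC X ξ) - (C.bracC X (cext I ξ)))), h3]
    module
  · have q1 : C.pairC (cext I (C.bracC X ξ)) (cext I η) = C.pairC (C.bracC X ξ) η := by
      rw [skewIC h, cII h, map_neg, neg_neg]
    have q2 : C.pairC (C.bracC X (cext I ξ)) (cext I η) = 0 :=
      eigP_isotropic h (eigP_brac h hX (eigM_I h hξ)) (eigM_I h hη)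
    have q3 : C.pairC (cext I (C.bracC X ξ)) (cext K η) = -(Complex.I • C.pairC (C.bracC X ξ) η) := by
      rw [skewIC h, cIK h, map_neg, neg_neg, hη', map_neg, map_smul]
    have q4 : C.pairC (C.bracC X (cext I ξ)) (cext K η) = 0 :=
      eigP_isotropic h (eigP_brac h hX (eigM_I h hξ)) (eigM_K h hη)
    have exp1 : C.pairC (cext I (C.bracC X ξ) - (C.bracC X (cext I ξ))) (cext I η) = C.pairC (C.bracC X ξ) η := by
      rw [map_sub, LinearMap.sub_apply, q1, q2, sub_zero]
    have exp2 : C.pairC (cext I (C.bracC X ξ) - (C.bracC X (cext I ξ))) (cext K η) = -(Complex.I • C.pairC (C.bracC X ξ) η) := by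
      rw [map_sub, LinearMap.sub_apply, q3, q4, sub_zero]
    have exp3 : C.pairC (cext J (cext I (C.bracC X ξ) - (C.bracC X (cext I ξ))) - Complex.I • (cext I (C.bracC X ξ) - (C.bracC X (cext I ξ)))) (cext K η) = -((2:ℂ) • C.pairC (C.bracC X ξ) η) := by
      rw [map_sub, LinearMap.sub_apply, map_smul, LinearMap.smul_apply,
        skewJC h (cext I (C.bracC X ξ) - (C.bracC X (cext I ξ))) (cext K η), cJK h η, exp1, exp2, smul_neg, smul_smul,
        Complex.I_mul_I, neg_one_smul]
      module
    rw [hstep, map_neg, LinearMap.neg_apply, map_smul, LinearMap.smul_apply,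
      skewKC h (cext J (cext I (C.bracC X ξ) - (C.bracC X (cext I ξ))) - Complex.I • (cext I (C.bracC X ξ) - (C.bracC X (cext I ξ)))) η, exp3]
    module

end HCAux

end Main

open CourantAlgebroid

theorem stmt16 {A E : Type} [CommRing A] [Algebra ℝ A] [AddCommGroup E] [Module ℝ E]
    [Module A E] [IsScalarTower ℝ A E] (C : CourantAlgebroid A E) (I J K : E →ₗ[A] E)
    (h : C.IsHypercomplex I J K) :
    ∀ X Y ξ η : ℂ ⊗[ℝ] E, X ∈ eigP (cext J) → Y ∈ eigP (cext J) →
      ξ ∈ eigM (cext J) → η ∈ eigM (cext J) →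
      C.hconnC I J K X ξ ∈ eigM (cext (A := A) (E := E) J) ∧
      C.pairC (C.hconnC I J K X ξ) Y =
        C.rhoC X (C.pairC ξ Y) - C.rhoC Y (C.pairC ξ X) - C.pairC ξ (C.bracC X Y) ∧
      C.hconnC I J K ξ X ∈ eigP (cext (A := A) (E := E) J) ∧
      C.pairC (C.hconnC I J K ξ X) η =
        C.rhoC ξ (C.pairC X η) - C.rhoC η (C.pairC X ξ) - C.pairC X (C.bracC ξ η) := by
  intro X Y ξ η hX hY hξ hη
  obtain ⟨m1, p1⟩ := HCAux.main1 h X Y ξ hX hY hξ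
  obtain ⟨m2, p2⟩ := HCAux.main2 h X ξ η hX hξ hη
  refine ⟨m1, ?_, m2, ?_⟩
  · rw [C.rhs_reduce X Y ξ]; exact p1
  · rw [C.rhs_reduce ξ η X]; exact p2
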